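/- Let ξ₁,ξ₂,… be i.i.d. nonnegative with tail F̄ regularly varying of index −1 and integrated tail G. If (xₙ) is a positive sequence with limsupₙ xₙ/(nG(xₙ)) = 0 (and xₙ → ∞), then P(Sₙ ≥ xₙ) → 1 as n → ∞. -/

import Mathlib

open Filter MeasureTheory ProbabilityTheory

/-- Theorem 1(c): if `xₙ → ∞` and `xₙ/(n G(xₙ)) → 0` (i.e. `limsup = 0` for this
nonnegative ratio), then `P(Sₙ ≥ xₙ) → 1`. -/
theorem stmt11 {Ω : Type*} [MeasurableSpace Ω] (μ : Measure Ω) [IsProbabilityMeasure μ]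
    (ξ : ℕ → Ω → ℝ) (hmeas : ∀ i, Measurable (ξ i))
    (hindep : iIndepFun ξ μ)
    (hident : ∀ i, IdentDistrib (ξ i) (ξ 0) μ μ)
    (hξ0 : ∀ i ω, 0 ≤ ξ i ω)
    (ℓ Fbar G : ℝ → ℝ)
    (hFbar : ∀ x, Fbar x = (μ {ω | x ≤ ξ 0 ω}).toReal)
    (htail : ∀ x > (0:ℝ), Fbar x = ℓ x / x)
    (hslow : ∀ l > (0:ℝ), Tendsto (fun x => ℓ (l * x) / ℓ x) atTop (nhds 1))
    (hG : ∀ x, G x = ∫ t in Set.Ioc 0 x, Fbar t)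
    (x : ℕ → ℝ) (hx : ∀ n, 0 < x n) (hxinf : Tendsto x atTop atTop)
    (hzero : Tendsto (fun (n : ℕ) => x n / ((n : ℝ) * G (x n))) atTop (nhds 0)) :
    Tendsto (fun (n : ℕ) =>
        (μ {ω | x n ≤ ∑ i ∈ Finset.range n, ξ i ω}).toReal) atTop (nhds 1) := by
  classical
  -- truncated variables are in every Lᵖ
  have hYmeas : ∀ (i : ℕ) (c : ℝ), Measurable (fun ω => min (ξ i ω) c) :=
    fun i c => (hmeas i).min measurable_const
  have hYmem : ∀ (i : ℕ) (c : ℝ), 0 < c → MemLp (fun ω => min (ξ i ω) c) 2 μ := by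
    intro i c hc
    refine (memLp_top_of_bound (hYmeas i c).aestronglyMeasurable c
      (Filter.Eventually.of_forall fun ω => ?_)).mono_exponent le_top
    rw [Real.norm_eq_abs, abs_of_nonneg (le_min (hξ0 i ω) hc.le)]
    exact min_le_right _ _
  -- layer cake: the expectation of the truncation is the integrated tail
  have hInt0 : ∀ c : ℝ, 0 < c → ∫ ω, min (ξ 0 ω) c ∂μ = G c := by
    intro c hc
    have hint := (hYmem 0 c hc).integrable one_le_two
    have h1 := hint.integral_eq_integral_Ioc_meas_le
      (Filter.Eventually.of_forall fun ω => le_min (hξ0 0 ω) hc.le)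
      (Filter.Eventually.of_forall fun ω => min_le_right _ _)
    rw [h1, hG c]
    refine setIntegral_congr_fun measurableSet_Ioc fun t ht => ?_
    rw [hFbar]
    congr 2
    ext ω
    simp only [Set.mem_setOf_eq, le_min_iff]
    exact and_iff_left ht.2
  -- find a point where the tail is positive
  obtain ⟨x₀, hx₀pos, hFx₀⟩ : ∃ x₀ > (0:ℝ), 0 < Fbar x₀ := by
    have h1 := hslow 1 one_pos
    have h2 : ∀ᶠ y in atTop, ℓ (1 * y) / ℓ y ≠ 0 := h1.eventually_ne one_ne_zero
    obtain ⟨y, hy1, hy2⟩ := (h2.and (eventually_ge_atTop (1:ℝ))).exists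
    have hy0 : (0:ℝ) < y := lt_of_lt_of_le one_pos hy2
    have hl : ℓ y ≠ 0 := by
      intro h; apply hy1; rw [one_mul, h, div_zero]
    refine ⟨y, hy0, ?_⟩
    have hne : Fbar y ≠ 0 := by
      rw [htail y hy0]; exact div_ne_zero hl hy0.ne'
    have hnn : 0 ≤ Fbar y := by rw [hFbar]; exact ENNReal.toReal_nonneg
    exact lt_of_le_of_ne hnn (Ne.symm hne)
  -- the integrated tail is bounded below
  have hGpos : ∀ c, x₀ ≤ c → x₀ * Fbar x₀ ≤ G c := by
    intro c hc
    have hcpos : 0 < c := lt_of_lt_of_le hx₀pos hc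
    rw [← hInt0 c hcpos]
    have hint := (hYmem 0 c hcpos).integrable one_le_two
    set s : Set Ω := {ω | x₀ ≤ ξ 0 ω} with hs
    have hsm : MeasurableSet s := measurableSet_le measurable_const (hmeas 0)
    have h1 : ∫ _ω in s, (x₀:ℝ) ∂μ ≤ ∫ ω in s, min (ξ 0 ω) c ∂μ := by
      refine setIntegral_mono_on ((integrable_const x₀).integrableOn)
        hint.integrableOn hsm fun ω hω => le_min hω hc
    have h2 : ∫ ω in s, min (ξ 0 ω) c ∂μ ≤ ∫ ω, min (ξ 0 ω) c ∂μ :=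
      setIntegral_le_integral hint
        (Filter.Eventually.of_forall fun ω => le_min (hξ0 0 ω) hcpos.le)
    have h3 : ∫ _ω in s, (x₀:ℝ) ∂μ = (μ s).toReal * x₀ := by
      rw [setIntegral_const, smul_eq_mul]; rfl
    have h4 : x₀ * Fbar x₀ = (μ s).toReal * x₀ := by rw [hFbar]; ring
    rw [h4, ← h3]
    exact le_trans h1 h2
  -- abbreviations
  set r : ℕ → ℝ := fun n => x n / ((n : ℝ) * G (x n)) with hr
  -- the main Chebyshev bound, valid eventually
  have hmain : ∀ᶠ n in atTop,
      (μ {ω | ∑ i ∈ Finset.range n, ξ i ω < x n}).toReal ≤ r n / (1 - r n) ^ 2 := by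
    filter_upwards [hxinf.eventually (eventually_ge_atTop x₀), eventually_ge_atTop 1,
      hzero.eventually_lt_const (by norm_num : (0:ℝ) < 1/2)] with n hxn hn1 hrn
    set M : ℝ := x n with hM
    have hMpos : 0 < M := hx n
    set m : ℝ := G M with hGm
    have hmpos : 0 < m := lt_of_lt_of_le (mul_pos hx₀pos hFx₀) (hGpos M hxn)
    have hnm : (0:ℝ) < (n : ℝ) * m :=
      mul_pos (by exact_mod_cast Nat.lt_of_lt_of_le Nat.zero_lt_one hn1) hmpos
    have hrval : r n = M / ((n : ℝ) * m) := rfl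
    have hMlt : M < (n : ℝ) * m / 2 := by
      have := (div_lt_iff₀ hnm).mp (hrval ▸ hrn)
      linarith
    set Y : ℕ → Ω → ℝ := fun i ω => min (ξ i ω) M with hY
    have hu : Measurable (fun y : ℝ => min y M) := measurable_id.min measurable_const
    have hmem : ∀ i, MemLp (Y i) 2 μ := fun i => hYmem i M hMpos
    have hidY : ∀ i, IdentDistrib (Y i) (Y 0) μ μ := fun i => (hident i).comp hu
    have hEY : ∀ i, ∫ ω, Y i ω ∂μ = m := fun i => by
      rw [(hidY i).integral_eq]; exact hInt0 M hMpos
    set S' : Ω → ℝ := ∑ i ∈ Finset.range n, Y i with hS'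
    have hS'mem : MemLp S' 2 μ := memLp_finset_sum' _ fun i _ => hmem i
    have hES' : μ[S'] = (n : ℝ) * m := by
      have : μ[S'] = ∑ i ∈ Finset.range n, ∫ ω, Y i ω ∂μ := by
        rw [hS']
        rw [show (∫ ω, (∑ i ∈ Finset.range n, Y i) ω ∂μ)
            = ∫ ω, ∑ i ∈ Finset.range n, Y i ω ∂μ by simp [Finset.sum_apply]]
        exact integral_finset_sum _ fun i _ => (hmem i).integrable one_le_two
      rw [this]
      simp [hEY, mul_comm]
    -- independence of truncations
    have hindY : iIndepFun Y μ :=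
      hindep.comp (fun _ y => min y M) fun _ => hu
    have hvarsum : variance S' μ = (n : ℝ) * variance (Y 0) μ := by
      rw [hS', IndepFun.variance_sum (fun i _ => hmem i)
        (fun i _ j _ hij => hindY.indepFun hij)]
      have : ∀ i ∈ Finset.range n, variance (Y i) μ = variance (Y 0) μ :=
        fun i _ => (hidY i).variance_eq
      rw [Finset.sum_congr rfl this, Finset.sum_const, Finset.card_range, nsmul_eq_mul]
    have hvarY : variance (Y 0) μ ≤ M * m := by
      have h1 : variance (Y 0) μ ≤ μ[(Y 0) ^ 2] :=
        variance_le_expectation_sq (hmem 0).aestronglyMeasurable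
      have h2 : μ[(Y 0) ^ 2] ≤ ∫ ω, M * Y 0 ω ∂μ := by
        refine integral_mono (hmem 0).integrable_sq
          (((hmem 0).integrable one_le_two).const_mul M) fun ω => ?_
        simp only [Pi.pow_apply, sq]
        exact mul_le_mul_of_nonneg_right (min_le_right _ _) (le_min (hξ0 0 ω) hMpos.le)
      have h3 : ∫ ω, M * Y 0 ω ∂μ = M * m := by rw [integral_const_mul, hEY]
      calc variance (Y 0) μ ≤ μ[(Y 0) ^ 2] := h1
        _ ≤ M * m := h3 ▸ h2
    -- Chebyshev
    set c : ℝ := (n : ℝ) * m - M with hc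
    have hcpos : 0 < c := by rw [hc]; linarith
    have hcheb := meas_ge_le_variance_div_sq hS'mem hcpos
    have hsub : {ω | ∑ i ∈ Finset.range n, ξ i ω < x n}
        ⊆ {ω | c ≤ |S' ω - μ[S']|} := by
      intro ω hω
      simp only [Set.mem_setOf_eq] at hω ⊢
      have hSle : S' ω ≤ ∑ i ∈ Finset.range n, ξ i ω := by
        rw [hS', Finset.sum_apply]
        exact Finset.sum_le_sum fun i _ => min_le_left _ _
      have hlt : S' ω < M := lt_of_le_of_lt hSle hω
      rw [hES']
      refine le_abs.mpr (Or.inr ?_)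
      rw [hc]; linarith
    have hB : (0:ℝ) ≤ variance S' μ / c ^ 2 :=
      div_nonneg (variance_nonneg _ _) (sq_nonneg c)
    have hmeasle : μ {ω | ∑ i ∈ Finset.range n, ξ i ω < x n}
        ≤ ENNReal.ofReal (variance S' μ / c ^ 2) :=
      le_trans (measure_mono hsub) hcheb
    have htoReal : (μ {ω | ∑ i ∈ Finset.range n, ξ i ω < x n}).toReal
        ≤ variance S' μ / c ^ 2 := by
      have := ENNReal.toReal_mono ENNReal.ofReal_ne_top hmeasle
      rwa [ENNReal.toReal_ofReal hB] at this
    refine le_trans htoReal ?_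
    have hvs : variance S' μ / c ^ 2 ≤ ((n : ℝ) * M * m) / c ^ 2 := by
      apply (div_le_div_iff_of_pos_right (pow_pos hcpos 2)).mpr
      · rw [hvarsum]
        calc (n:ℝ) * variance (Y 0) μ ≤ (n:ℝ) * (M * m) :=
              mul_le_mul_of_nonneg_left hvarY (Nat.cast_nonneg n)
          _ = (n:ℝ) * M * m := by ring
    refine le_trans hvs (le_of_eq ?_)
    rw [hrval, hc]
    have hne1 : ((n:ℝ) * m) ≠ 0 := hnm.ne'
    have hne2 : ((n:ℝ) * m - M) ≠ 0 := by rw [← hc]; exact hcpos.ne'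
    rw [show (1:ℝ) - M / ((n:ℝ)*m) = ((n:ℝ)*m - M)/((n:ℝ)*m) by field_simp]
    rw [div_pow, div_div_div_eq]
    rw [div_eq_div_iff (by positivity) (by positivity)]
    ring
  -- complement identity
  have hmS : ∀ n, MeasurableSet {ω | x n ≤ ∑ i ∈ Finset.range n, ξ i ω} :=
    fun n => measurableSet_le measurable_const (Finset.measurable_sum _ fun i _ => hmeas i)
  have hcompl : ∀ n, (μ {ω | x n ≤ ∑ i ∈ Finset.range n, ξ i ω}).toReal
      = 1 - (μ {ω | ∑ i ∈ Finset.range n, ξ i ω < x n}).toReal := by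
    intro n
    have hcs : {ω | x n ≤ ∑ i ∈ Finset.range n, ξ i ω}ᶜ
        = {ω | ∑ i ∈ Finset.range n, ξ i ω < x n} := by
      ext ω; simp [not_le]
    have h := measure_add_measure_compl (μ := μ) (hmS n)
    rw [hcs, measure_univ] at h
    have h' := congrArg ENNReal.toReal h
    rw [ENNReal.toReal_add (measure_ne_top μ _) (measure_ne_top μ _), ENNReal.toReal_one] at h'
    linarith
  -- squeeze to zero
  have htend0 : Tendsto (fun n => (μ {ω | ∑ i ∈ Finset.range n, ξ i ω < x n}).toReal)
      atTop (nhds 0) := by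
    have hBlim : Tendsto (fun n => r n / (1 - r n) ^ 2) atTop (nhds 0) := by
      have h2 : Tendsto (fun n => (1 - r n) ^ 2) atTop (nhds ((1 - 0) ^ 2)) :=
        (tendsto_const_nhds.sub hzero).pow 2
      have := hzero.div h2 (by norm_num)
      exact (by simpa using this : Tendsto (r / fun n => (1 - r n) ^ 2) atTop (nhds 0))
    refine tendsto_of_tendsto_of_tendsto_of_le_of_le' tendsto_const_nhds hBlim
      (Filter.Eventually.of_forall fun n => ENNReal.toReal_nonneg) hmain
  have : Tendsto (fun n => 1 - (μ {ω | ∑ i ∈ Finset.range n, ξ i ω < x n}).toReal)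
      atTop (nhds (1 - 0)) := tendsto_const_nhds.sub htend0
  simp only [sub_zero] at this
  exact this.congr fun n => (hcompl n).symm
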